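/- Suppose a filtered *-algebra A with faithful state σ satisfies the Haagerup-type condition: there is a constant C such that ‖P_m a_k P_n‖ ≤ C‖a_k‖₂ for all a ∈ A and integers m, n, k, where a_k = P_k(a). Then for every a ∈ A and every k, ‖a_k‖ ≤ C(2k+1)‖a_k‖₂, where ‖·‖ is the operator norm and ‖·‖₂ the GNS norm. -/

import Mathlib

variable {A : Type*} [Ring A] [Algebra ℂ A] [StarRing A]

/-- The `L²`-norm of `x ∈ A` coming from the state `σ`: `‖x‖₂ = √(σ(x*x))`. -/
noncomputable def l2norm (σ : A →ₗ[ℂ] ℂ) (x : A) : ℝ := Real.sqrt (σ (star x * x)).re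

/-- The successive orthogonal differences of the filtration `F`, computed inside `A`
with respect to the `σ`-inner product `⟨x, y⟩ = σ(x* y)`:
`E 0 = A_0` and `E (n+1) = A_{n+1} ⊖ A_n`. -/
def Ediff (σ : A →ₗ[ℂ] ℂ) (F : ℕ → Submodule ℂ A) : ℕ → Set A
  | 0 => F 0
  | (n + 1) => {x | x ∈ F (n + 1) ∧ ∀ y ∈ F n, σ (star y * x) = 0}

/-- `P` is the family of orthogonal projections of `A` (with its `σ`-inner product)
onto the successive differences `Ediff σ F n` of the filtration `F`:
each `P n` has range in `E_n`, fixes `E_n`, kills `E_m` for `m ≠ n`, and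
every element of `A_N` is the sum of its components `P 0 x, …, P N x`. -/
def IsProjFamily (σ : A →ₗ[ℂ] ℂ) (F : ℕ → Submodule ℂ A) (P : ℕ → A →ₗ[ℂ] A) : Prop :=
  (∀ n x, P n x ∈ Ediff σ F n) ∧
  (∀ n, ∀ x ∈ Ediff σ F n, P n x = x) ∧
  (∀ m n : ℕ, m ≠ n → ∀ x ∈ Ediff σ F m, P n x = 0) ∧
  (∀ N : ℕ, ∀ x ∈ F N, x = ∑ n ∈ Finset.range (N + 1), P n x)

/-- `(A, σ, F)` is a *-filtration of the unital *-algebra `A` by finite-dimensional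
subspaces, with `A_0 = ℂ1`, and `σ` is a faithful tracial state on `A`. -/
def IsFilteredStarAlgWithState (σ : A →ₗ[ℂ] ℂ) (F : ℕ → Submodule ℂ A) : Prop :=
  Monotone F ∧
  (∀ a : A, ∃ n, a ∈ F n) ∧
  (∀ n, ∀ a ∈ F n, star a ∈ F n) ∧
  (∀ m n : ℕ, ∀ a ∈ F m, ∀ b ∈ F n, a * b ∈ F (m + n)) ∧
  (F 0 = Submodule.span ℂ {1}) ∧
  (∀ n, FiniteDimensional ℂ (F n)) ∧
  σ 1 = 1 ∧
  (∀ a : A, a ≠ 0 → 0 < (σ (star a * a)).re ∧ (σ (star a * a)).im = 0) ∧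
  (∀ a b : A, σ (a * b) = σ (b * a))

/-- The Haagerup-type condition with constant `C`: `‖P_m a_k P_n‖ ≤ C ‖a_k‖₂`,
expressed concretely: for every `a ∈ E_k` and every `ξ ∈ E_n`,
`‖P_m (a ξ)‖₂ ≤ C ‖a‖₂ ‖ξ‖₂`. -/
def HaagerupTypeCond (σ : A →ₗ[ℂ] ℂ) (F : ℕ → Submodule ℂ A) (P : ℕ → A →ₗ[ℂ] A)
    (C : ℝ) : Prop :=
  ∀ k m n : ℕ, ∀ a ∈ Ediff σ F k, ∀ ξ ∈ Ediff σ F n,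
    l2norm σ (P m (a * ξ)) ≤ C * l2norm σ a * l2norm σ ξ


section helperlemmas
variable (σ : A →ₗ[ℂ] ℂ) (F : ℕ → Submodule ℂ A)

lemma star_smul'
    (hmono : Monotone F)
    (hstar : ∀ n, ∀ a ∈ F n, star a ∈ F n)
    (hspan : F 0 = Submodule.span ℂ {1})
    (hone : σ 1 = 1)
    (hf : ∀ a : A, a ≠ 0 → 0 < (σ (star a * a)).re ∧ (σ (star a * a)).im = 0)
    (c : ℂ) (x : A) : star (c • x) = (starRingEnd ℂ c) • star x := by
  set ψ : ℂ → ℂ := fun c => σ (star (c • (1:A))) with hψ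
  have hσsmul : ∀ d : ℂ, σ (d • (1:A)) = d := by
    intro d; rw [map_smul, hone, smul_eq_mul, mul_one]
  have hbase : ∀ c : ℂ, star (c • (1:A)) = ψ c • (1:A) := by
    intro c
    have h1 : c • (1:A) ∈ F 0 := by
      rw [hspan]; exact Submodule.smul_mem _ c (Submodule.mem_span_singleton_self 1)
    have h2 : star (c • (1:A)) ∈ F 0 := hstar 0 _ h1
    rw [hspan] at h2
    obtain ⟨d, hd⟩ := Submodule.mem_span_singleton.mp h2
    have : σ (d • (1:A)) = ψ c := by rw [hd]
    rw [hσsmul] at this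
    rw [← hd, this]
  have hinj : ∀ d : ℂ, d • (1:A) ≠ 0 ↔ d ≠ 0 := by
    intro d
    constructor
    · intro h hd; exact h (by simp [hd])
    · intro hd h
      have := hσsmul d
      rw [h, map_zero] at this
      exact hd this.symm
  have hadd : ∀ c d : ℂ, ψ (c + d) = ψ c + ψ d := by
    intro c d; simp only [hψ, add_smul, star_add, map_add]
  have hmul1 : ∀ c d : ℂ, (c * d) • (1:A) = (c • (1:A)) * (d • (1:A)) := by
    intro c d; rw [mul_smul, smul_mul_assoc, one_mul, ← smul_assoc, smul_eq_mul]
  have hprod : ∀ c : ℂ, σ (star (c • (1:A)) * (c • (1:A))) = ψ c * c := by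
    intro c
    rw [hbase, smul_mul_assoc, one_mul, map_smul, hσsmul, smul_eq_mul]
  have himzero : ∀ c : ℂ, (ψ c * c).im = 0 := by
    intro c
    by_cases hc : c = 0
    · simp [hc]
    · rw [← hprod]
      exact (hf _ ((hinj c).mpr hc)).2
  have hpsi1 : ψ 1 = 1 := by simp [hψ, hone]
  have hreal : ∀ c : ℂ, (c + ψ c).im = 0 := by
    intro c
    have h := himzero (1 + c)
    have hexp : ψ (1 + c) = 1 + ψ c := by rw [hadd, hpsi1]
    rw [hexp] at h
    have := himzero c
    simp only [Complex.add_im, Complex.mul_im, Complex.add_re, Complex.one_re,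
      Complex.one_im, Complex.mul_re] at h this ⊢
    nlinarith [this]
  have hconj_im : ∀ c : ℂ, c.im ≠ 0 → ψ c = starRingEnd ℂ c := by
    intro c hc
    have hr : ψ c = Complex.mk (2 * c.re - c.re) (-c.im) := by
      have h1 := hreal c
      have h2 := himzero c
      have hre : (ψ c).im = -c.im := by
        simp only [Complex.add_im] at h1; linarith
      have : (ψ c).re = 2 * c.re - c.re := by
        simp only [Complex.mul_im] at h2
        rw [hre] at h2
        have : ((ψ c).re - c.re) * c.im = 0 := by ring_nf; ring_nf at h2; linarith
        rcases mul_eq_zero.mp this with h | h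
        · linarith
        · exact absurd h hc
      apply Complex.ext
      · exact this
      · exact hre
    rw [hr]
    apply Complex.ext <;> simp [Complex.conj_re, Complex.conj_im] <;> ring
  have hconj : ∀ c : ℂ, ψ c = starRingEnd ℂ c := by
    intro c
    by_cases hc : c.im = 0
    · have h1 : ψ (c + Complex.I) = starRingEnd ℂ (c + Complex.I) := by
        apply hconj_im; simp [hc]
      have h2 : ψ Complex.I = starRingEnd ℂ Complex.I := by
        apply hconj_im; simp
      have := hadd c Complex.I
      rw [h1] at this
      have : ψ c = starRingEnd ℂ (c + Complex.I) - ψ Complex.I := by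
        rw [this]; ring
      rw [this, h2, map_add]; ring
    · exact hconj_im c hc
  calc star (c • x) = star ((c • (1:A)) * x) := by rw [smul_mul_assoc, one_mul]
    _ = star x * star (c • (1:A)) := by rw [star_mul]
    _ = star x * ((starRingEnd ℂ c) • (1:A)) := by rw [hbase, hconj]
    _ = (starRingEnd ℂ c) • star x := by rw [mul_smul_comm, mul_one]


lemma conj_symm
    (hsm : ∀ (c : ℂ) (x : A), star (c • x) = (starRingEnd ℂ c) • star x)
    (him : ∀ x : A, (σ (star x * x)).im = 0)
    (x y : A) : σ (star y * x) = starRingEnd ℂ (σ (star x * y)) := by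
  have key : ∀ u v : A, (σ (star u * v) + σ (star v * u)).im = 0 := by
    intro u v
    have h := him (u + v)
    have expand : σ (star (u+v) * (u+v)) =
        σ (star u * u) + σ (star u * v) + σ (star v * u) + σ (star v * v) := by
      rw [star_add, add_mul, mul_add, mul_add, map_add, map_add, map_add]
      ring
    rw [expand] at h
    simp only [Complex.add_im, him u, him v] at h
    simp only [Complex.add_im]
    linarith
  have key2 : ∀ u v : A, (σ (star u * v) - σ (star v * u)).re = 0 := by
    intro u v
    have h := key u (Complex.I • v)
    have e1 : σ (star u * (Complex.I • v)) = Complex.I * σ (star u * v) := by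
      rw [mul_smul_comm, map_smul, smul_eq_mul]
    have e2 : σ (star (Complex.I • v) * u) = - Complex.I * σ (star v * u) := by
      rw [hsm, smul_mul_assoc, map_smul, smul_eq_mul]
      simp [Complex.conj_I]
    rw [e1, e2] at h
    simp only [Complex.add_im, Complex.mul_im, Complex.I_re, Complex.I_im,
      Complex.neg_im, Complex.neg_re] at h ⊢
    simp only [Complex.sub_re]
    linarith
  have h1 := key x y
  have h2 := key2 x y
  apply Complex.ext
  · simp only [Complex.conj_re]
    simp only [Complex.sub_re] at h2; linarith
  · simp only [Complex.conj_im]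
    simp only [Complex.add_im] at h1; linarith

lemma cauchy_schwarz
    (hsm : ∀ (c : ℂ) (x : A), star (c • x) = (starRingEnd ℂ c) • star x)
    (hf : ∀ a : A, a ≠ 0 → 0 < (σ (star a * a)).re ∧ (σ (star a * a)).im = 0)
    (x y : A) : ‖σ (star x * y)‖ ≤ l2norm σ x * l2norm σ y := by
  have him : ∀ z : A, (σ (star z * z)).im = 0 := by
    intro z
    by_cases hz : z = 0
    · simp [hz]
    · exact (hf z hz).2
  have hre : ∀ z : A, 0 ≤ (σ (star z * z)).re := by
    intro z
    by_cases hz : z = 0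
    · simp [hz]
    · exact (hf z hz).1.le
  by_cases hy : y = 0
  · simp [hy, l2norm]
  · have hd : 0 < (σ (star y * y)).re := (hf y hy).1
    set d : ℝ := (σ (star y * y)).re with hdd
    have hyy : σ (star y * y) = (d : ℂ) := by
      apply Complex.ext
      · simp [hdd]
      · simp [him y]
    set β : ℂ := σ (star y * x) with hβ
    have hxy : σ (star x * y) = starRingEnd ℂ β := conj_symm σ hsm him y x
    set c : ℂ := β / (d : ℂ) with hc
    have hz := hre (x - c • y)
    have expand : σ (star (x - c • y) * (x - c • y)) =
        σ (star x * x) - c * σ (star x * y) - starRingEnd ℂ c * σ (star y * x)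
          + starRingEnd ℂ c * c * σ (star y * y) := by
      rw [star_sub, hsm, sub_mul, mul_sub, mul_sub, smul_mul_assoc, smul_mul_assoc,
        mul_smul_comm, mul_smul_comm]
      simp only [map_sub, map_smul, smul_eq_mul]
      ring
    have hdne : (d : ℂ) ≠ 0 := by exact_mod_cast ne_of_gt hd
    have h1 : starRingEnd ℂ β * β = ((‖β‖ ^ 2 : ℝ) : ℂ) := by
      rw [mul_comm, Complex.mul_conj, Complex.normSq_eq_norm_sq]
    have calc1 : σ (star (x - c • y) * (x - c • y)) =
        σ (star x * x) - (‖β‖ ^ 2 / d : ℝ) := by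
      rw [expand, hxy, hyy, hc, map_div₀, Complex.conj_ofReal]
      push_cast at h1 ⊢
      field_simp
      linear_combination -h1
    rw [calc1] at hz
    simp only [Complex.sub_re, Complex.ofReal_re] at hz
    have hβ2 : ‖β‖ ^ 2 ≤ (σ (star x * x)).re * d :=
      (div_le_iff₀ hd).mp (by linarith)
    have habs : ‖β‖ ≤ Real.sqrt ((σ (star x * x)).re * d) := by
      rw [← Real.sqrt_sq (norm_nonneg β)]
      exact Real.sqrt_le_sqrt hβ2
    rw [Real.sqrt_mul (hre x)] at habs
    rw [hxy, Complex.norm_conj]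
    exact habs

lemma l2'_triangle
    (hsm : ∀ (c : ℂ) (x : A), star (c • x) = (starRingEnd ℂ c) • star x)
    (hf : ∀ a : A, a ≠ 0 → 0 < (σ (star a * a)).re ∧ (σ (star a * a)).im = 0)
    (x y : A) : l2norm σ (x + y) ≤ l2norm σ x + l2norm σ y := by
  have him : ∀ z : A, (σ (star z * z)).im = 0 := by
    intro z
    by_cases hz : z = 0
    · simp [hz]
    · exact (hf z hz).2
  have hre : ∀ z : A, 0 ≤ (σ (star z * z)).re := by
    intro z
    by_cases hz : z = 0
    · simp [hz]
    · exact (hf z hz).1.le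
  have expand : σ (star (x+y) * (x+y)) =
      σ (star x * x) + σ (star x * y) + σ (star y * x) + σ (star y * y) := by
    rw [star_add, add_mul, mul_add, mul_add, map_add, map_add, map_add]
    ring
  have hcs := cauchy_schwarz σ hsm hf x y
  have hsym := conj_symm σ hsm him x y
  have hre1 : (σ (star x * y) + σ (star y * x)).re = 2 * (σ (star x * y)).re := by
    rw [hsym]; simp [Complex.add_re]; ring
  have hrebound : (σ (star x * y)).re ≤ l2norm σ x * l2norm σ y :=
    le_trans (Complex.re_le_norm _) hcs
  have hsq : (σ (star (x+y) * (x+y))).re ≤ (l2norm σ x + l2norm σ y)^2 := by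
    rw [expand]
    simp only [Complex.add_re]
    have e1 : l2norm σ x ^ 2 = (σ (star x * x)).re := Real.sq_sqrt (hre x)
    have e2 : l2norm σ y ^ 2 = (σ (star y * y)).re := Real.sq_sqrt (hre y)
    have h2 : (σ (star x * y)).re + (σ (star y * x)).re = 2 * (σ (star x * y)).re := by
      have := hre1; simpa [Complex.add_re] using this
    nlinarith [h2, hrebound, e1, e2]
  calc l2norm σ (x + y) = Real.sqrt ((σ (star (x+y) * (x+y))).re) := rfl
    _ ≤ Real.sqrt ((l2norm σ x + l2norm σ y)^2) := Real.sqrt_le_sqrt hsq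
    _ = l2norm σ x + l2norm σ y :=
        Real.sqrt_sq (add_nonneg (Real.sqrt_nonneg _) (Real.sqrt_nonneg _))

lemma l2'_sum_le
    (hsm : ∀ (c : ℂ) (x : A), star (c • x) = (starRingEnd ℂ c) • star x)
    (hf : ∀ a : A, a ≠ 0 → 0 < (σ (star a * a)).re ∧ (σ (star a * a)).im = 0)
    (s : Finset ℕ) (f : ℕ → A) :
    l2norm σ (∑ i ∈ s, f i) ≤ ∑ i ∈ s, l2norm σ (f i) := by
  classical
  induction s using Finset.cons_induction with
  | empty => simp [l2norm]
  | cons a s ha ih =>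
    rw [Finset.sum_cons, Finset.sum_cons]
    exact le_trans (l2'_triangle σ hsm hf _ _) (by linarith)


lemma E_subset_F (n : ℕ) : Ediff σ F n ⊆ (F n : Set A) := by
  cases n with
  | zero => exact fun x hx => hx
  | succ n => exact fun x hx => hx.1

lemma orth
    (hmono : Monotone F)
    (hcs : ∀ x y : A, σ (star y * x) = starRingEnd ℂ (σ (star x * y)))
    {m n : ℕ} (hmn : m ≠ n) {x y : A} (hx : x ∈ Ediff σ F m) (hy : y ∈ Ediff σ F n) :
    σ (star x * y) = 0 := by
  have key : ∀ m' n' : ℕ, m' < n' → ∀ u ∈ Ediff σ F m', ∀ v ∈ Ediff σ F n',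
      σ (star u * v) = 0 := by
    intro m' n' h u hu v hv
    obtain ⟨n'', rfl⟩ : ∃ j, n' = j + 1 := ⟨n' - 1, by omega⟩
    exact hv.2 u (hmono (by omega : m' ≤ n'') (E_subset_F σ F m' hu))
  rcases lt_or_gt_of_ne hmn with h | h
  · exact key m n h x hx y hy
  · rw [hcs, key n m h y hy x hx, map_zero]

lemma vanish
    (hmono : Monotone F)
    (hstar : ∀ n, ∀ a ∈ F n, star a ∈ F n)
    (hmul : ∀ m n : ℕ, ∀ a ∈ F m, ∀ b ∈ F n, a * b ∈ F (m + n))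
    (hf : ∀ a : A, a ≠ 0 → 0 < (σ (star a * a)).re ∧ (σ (star a * a)).im = 0)
    (hcs : ∀ x y : A, σ (star y * x) = starRingEnd ℂ (σ (star x * y)))
    (P : ℕ → A →ₗ[ℂ] A)
    (hrange : ∀ n x, P n x ∈ Ediff σ F n)
    (hdecomp : ∀ N : ℕ, ∀ x ∈ F N, x = ∑ n ∈ Finset.range (N + 1), P n x)
    {k m n : ℕ} (h : k + m < n) {b y : A}
    (hb : b ∈ Ediff σ F k) (hy : y ∈ Ediff σ F n) :
    P m (b * y) = 0 := by
  set z := b * y with hzdef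
  have hzmem : z ∈ F (k + n) :=
    hmul k n b (E_subset_F σ F k hb) y (E_subset_F σ F n hy)
  have hd := hdecomp (k + n) z hzmem
  set w := P m z with hw
  have hwE : w ∈ Ediff σ F m := hrange m z
  -- first: σ (star w * z) = σ (star w * w)
  have e1 : σ (star w * z) = σ (star w * w) := by
    calc σ (star w * z) = σ (star w * ∑ j ∈ Finset.range (k + n + 1), P j z) := by
          conv_lhs => rw [hd]
      _ = ∑ j ∈ Finset.range (k + n + 1), σ (star w * P j z) := by
          rw [Finset.mul_sum, map_sum]
      _ = σ (star w * w) := by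
          apply Finset.sum_eq_single_of_mem m
          · rw [Finset.mem_range]; omega
          · intro j _ hj
            exact orth σ F hmono hcs (Ne.symm hj) hwE (hrange j z)
  -- second: σ (star w * z) = 0
  have e2 : σ (star w * z) = 0 := by
    obtain ⟨n'', rfl⟩ : ∃ j, n = j + 1 := ⟨n - 1, by omega⟩
    have hmem : star b * w ∈ F (k + m) :=
      hmul k m (star b) (hstar k b (E_subset_F σ F k hb)) w (E_subset_F σ F m hwE)
    have hmem' : star b * w ∈ F n'' := hmono (by omega : k + m ≤ n'') hmem
    have := hy.2 (star b * w) hmem'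
    rw [star_mul, star_star] at this
    rw [hzdef, ← mul_assoc]
    exact this
  rw [e1] at e2
  by_contra hne
  exact absurd e2 (by
    intro hc
    have : (σ (star w * w)).re = 0 := by rw [hc]; simp
    exact absurd this (ne_of_gt (hf w hne).1))


lemma P_zero_of_high
    (P : ℕ → A →ₗ[ℂ] A)
    (hrange : ∀ n x, P n x ∈ Ediff σ F n)
    (hkill : ∀ m n : ℕ, m ≠ n → ∀ x ∈ Ediff σ F m, P n x = 0)
    (hdecomp : ∀ N : ℕ, ∀ x ∈ F N, x = ∑ n ∈ Finset.range (N + 1), P n x)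
    {N : ℕ} {x : A} (hx : x ∈ F N) {m : ℕ} (hm : N < m) : P m x = 0 := by
  have hd := hdecomp N x hx
  have : P m x = ∑ n ∈ Finset.range (N + 1), P m (P n x) := by
    conv_lhs => rw [hd]
    rw [map_sum]
  rw [this]
  apply Finset.sum_eq_zero
  intro n hn
  rw [Finset.mem_range] at hn
  exact hkill n m (by omega) _ (hrange n x)

lemma pyth
    (hf : ∀ a : A, a ≠ 0 → 0 < (σ (star a * a)).re ∧ (σ (star a * a)).im = 0)
    (s : Finset ℕ) (f : ℕ → A)
    (horth : ∀ i ∈ s, ∀ j ∈ s, i ≠ j → σ (star (f i) * f j) = 0) :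
    l2norm σ (∑ i ∈ s, f i) ^ 2 = ∑ i ∈ s, l2norm σ (f i) ^ 2 := by
  have hre : ∀ z : A, 0 ≤ (σ (star z * z)).re := by
    intro z
    by_cases hz : z = 0
    · simp [hz]
    · exact (hf z hz).1.le
  have e1 : l2norm σ (∑ i ∈ s, f i) ^ 2 = (σ (star (∑ i ∈ s, f i) * ∑ i ∈ s, f i)).re :=
    Real.sq_sqrt (hre _)
  rw [e1]
  have expand : σ (star (∑ i ∈ s, f i) * ∑ i ∈ s, f i) =
      ∑ i ∈ s, σ (star (f i) * f i) := by
    rw [star_sum, Finset.sum_mul_sum, map_sum]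
    apply Finset.sum_congr rfl
    intro i hi
    rw [map_sum]
    apply Finset.sum_eq_single
    · intro j hj hji
      exact horth i hi j hj (Ne.symm hji)
    · intro hnotin
      exact absurd hi hnotin
  rw [expand, Complex.re_sum]
  apply Finset.sum_congr rfl
  intro i _
  exact (Real.sq_sqrt (hre _)).symm

end helperlemmas

/-- Under the Haagerup-type condition with constant `C`, for every `a ∈ A` and every `k`
the component `a_k = P_k a` satisfies the operator-norm bound
`‖a_k‖ ≤ C(2k+1)‖a_k‖₂`, i.e. `‖a_k ξ‖₂ ≤ C(2k+1)‖a_k‖₂‖ξ‖₂` for every `ξ ∈ A`. -/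

theorem stmt_4 (σ : A →ₗ[ℂ] ℂ) (F : ℕ → Submodule ℂ A) (P : ℕ → A →ₗ[ℂ] A) (C : ℝ)
    (hfilt : IsFilteredStarAlgWithState σ F)
    (hproj : IsProjFamily σ F P)
    (hHaag : HaagerupTypeCond σ F P C) :
    ∀ (a : A) (k : ℕ) (ξ : A),
      l2norm σ (P k a * ξ) ≤ C * (2 * (k : ℝ) + 1) * l2norm σ (P k a) * l2norm σ ξ := by
  classical
  obtain ⟨hmono, hexh, hstar, hmul, hspan, hfin, hone, hf, htr⟩ := hfilt
  obtain ⟨hrange, hfix, hkill, hdecomp⟩ := hproj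
  have hsm := star_smul' σ F hmono hstar hspan hone hf
  have him : ∀ x : A, (σ (star x * x)).im = 0 := by
    intro x
    by_cases hx : x = 0
    · simp [hx]
    · exact (hf x hx).2
  have hre : ∀ x : A, 0 ≤ (σ (star x * x)).re := by
    intro x
    by_cases hx : x = 0
    · simp [hx]
    · exact (hf x hx).1.le
  have hcs := conj_symm σ hsm him
  have l2nonneg : ∀ x : A, 0 ≤ l2norm σ x := fun x => Real.sqrt_nonneg _
  have l2sq : ∀ x : A, l2norm σ x ^ 2 = (σ (star x * x)).re := fun x => Real.sq_sqrt (hre x)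
  -- C ≥ 0
  have honeE : (1 : A) ∈ Ediff σ F 0 := by
    show (1 : A) ∈ F 0
    rw [hspan]; exact Submodule.mem_span_singleton_self 1
  have l2one : l2norm σ (1 : A) = 1 := by
    unfold l2norm
    rw [star_one, one_mul, hone]
    simp
  have hC : 0 ≤ C := by
    have h := hHaag 0 0 0 1 honeE 1 honeE
    rw [one_mul, hfix 0 1 honeE, l2one] at h
    linarith
  intro a k ξ
  set b := P k a with hb
  have hbE : b ∈ Ediff σ F k := hrange k a
  have hbF : b ∈ F k := E_subset_F σ F k hbE
  obtain ⟨N, hξF⟩ := hexh ξ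
  set ξc : ℕ → A := fun n => P n ξ with hξc
  have hξd : ξ = ∑ n ∈ Finset.range (N + 1), ξc n := hdecomp N ξ hξF
  set z := b * ξ with hzdef
  set R := Finset.range (N + 1) with hR
  set M := Finset.range (k + N + 1) with hM
  have hzsum : z = ∑ n ∈ R, b * ξc n := by
    rw [hzdef]
    conv_lhs => rw [hξd]
    rw [Finset.mul_sum]
  have hzmem : z ∈ F (k + N) := by
    rw [hzsum]
    apply Submodule.sum_mem
    intro n hn
    have h1 : ξc n ∈ F N := by
      apply hmono (by rw [hR] at hn; rw [Finset.mem_range] at hn; omega : n ≤ N)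
      exact E_subset_F σ F n (hrange n ξ)
    exact hmul k N b hbF _ h1
  -- Pythagoras for z
  have pz : l2norm σ z ^ 2 = ∑ m ∈ M, l2norm σ (P m z) ^ 2 := by
    have hd := hdecomp (k + N) z hzmem
    calc l2norm σ z ^ 2 = l2norm σ (∑ m ∈ M, P m z) ^ 2 := by conv_lhs => rw [hd]
      _ = ∑ m ∈ M, l2norm σ (P m z) ^ 2 := by
          apply pyth σ hf
          intro i _ j _ hij
          exact orth σ F hmono hcs hij (hrange i z) (hrange j z)
  -- Pythagoras for ξ
  have pxi : l2norm σ ξ ^ 2 = ∑ n ∈ R, l2norm σ (ξc n) ^ 2 := by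
    calc l2norm σ ξ ^ 2 = l2norm σ (∑ n ∈ R, ξc n) ^ 2 := by conv_lhs => rw [hξd]
      _ = ∑ n ∈ R, l2norm σ (ξc n) ^ 2 := by
          apply pyth σ hf
          intro i _ j _ hij
          exact orth σ F hmono hcs hij (hrange i ξ) (hrange j ξ)
  -- the index sets
  set S : ℕ → Finset ℕ := fun m => R.filter (fun n => m ≤ k + n ∧ n ≤ k + m) with hS
  have hcardS : ∀ m, (S m).card ≤ 2 * k + 1 := by
    intro m
    have hsub : S m ⊆ Finset.Icc (m - k) (m + k) := by
      intro n hn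
      rw [hS, Finset.mem_filter] at hn
      rw [Finset.mem_Icc]
      omega
    calc (S m).card ≤ (Finset.Icc (m - k) (m + k)).card := Finset.card_le_card hsub
      _ = m + k + 1 - (m - k) := Nat.card_Icc _ _
      _ ≤ 2 * k + 1 := by omega
  -- decompose P m z over S m
  have hPmz : ∀ m, P m z = ∑ n ∈ S m, P m (b * ξc n) := by
    intro m
    have h1 : P m z = ∑ n ∈ R, P m (b * ξc n) := by
      conv_lhs => rw [hzsum]
      rw [map_sum]
    rw [h1, hS]
    rw [← Finset.sum_filter_add_sum_filter_not R (fun n => m ≤ k + n ∧ n ≤ k + m)]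
    have h2 : ∑ n ∈ R.filter (fun n => ¬(m ≤ k + n ∧ n ≤ k + m)), P m (b * ξc n) = 0 := by
      apply Finset.sum_eq_zero
      intro n hn
      rw [Finset.mem_filter] at hn
      have hcond := hn.2
      push_neg at hcond
      by_cases hcase : m ≤ k + n
      · -- then n > k + m : use vanish
        have hlt : k + m < n := by omega
        exact vanish σ F hmono hstar hmul hf hcs P hrange hdecomp hlt hbE (hrange n ξ)
      · -- k + n < m : b * ξc n ∈ F (k+n), P m kills it
        push_neg at hcase
        have hmem : b * ξc n ∈ F (k + n) :=
          hmul k n b hbF _ (E_subset_F σ F n (hrange n ξ))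
        exact P_zero_of_high σ F P hrange hkill hdecomp hmem (by omega)
    rw [h2, add_zero]
  -- bound each component
  have hstep : ∀ m, l2norm σ (P m z) ≤ ∑ n ∈ S m, C * l2norm σ b * l2norm σ (ξc n) := by
    intro m
    calc l2norm σ (P m z) = l2norm σ (∑ n ∈ S m, P m (b * ξc n)) := by rw [hPmz m]
      _ ≤ ∑ n ∈ S m, l2norm σ (P m (b * ξc n)) := l2'_sum_le σ hsm hf _ _
      _ ≤ ∑ n ∈ S m, C * l2norm σ b * l2norm σ (ξc n) := by
          apply Finset.sum_le_sum
          intro n _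
          exact hHaag k m n b hbE (ξc n) (hrange n ξ)
  -- squared bound per component
  have hstep2 : ∀ m, l2norm σ (P m z) ^ 2 ≤
      (2 * (k:ℝ) + 1) * (C * l2norm σ b) ^ 2 * ∑ n ∈ S m, l2norm σ (ξc n) ^ 2 := by
    intro m
    have h1 : l2norm σ (P m z) ^ 2 ≤ (∑ n ∈ S m, C * l2norm σ b * l2norm σ (ξc n)) ^ 2 := by
      apply pow_le_pow_left₀ (l2nonneg _) (hstep m)
    have h2 : (∑ n ∈ S m, C * l2norm σ b * l2norm σ (ξc n)) ^ 2
        = (C * l2norm σ b) ^ 2 * (∑ n ∈ S m, l2norm σ (ξc n)) ^ 2 := by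
      rw [← Finset.mul_sum, mul_pow]
    have h3 : (∑ n ∈ S m, l2norm σ (ξc n)) ^ 2 ≤
        ((S m).card : ℝ) * ∑ n ∈ S m, l2norm σ (ξc n) ^ 2 :=
      sq_sum_le_card_mul_sum_sq
    have h4 : ((S m).card : ℝ) ≤ 2 * (k:ℝ) + 1 := by
      have := hcardS m
      push_cast
      exact_mod_cast this
    have h5 : 0 ≤ ∑ n ∈ S m, l2norm σ (ξc n) ^ 2 :=
      Finset.sum_nonneg fun n _ => sq_nonneg _
    calc l2norm σ (P m z) ^ 2
        ≤ (C * l2norm σ b) ^ 2 * (∑ n ∈ S m, l2norm σ (ξc n)) ^ 2 := by rw [← h2]; exact h1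
      _ ≤ (C * l2norm σ b) ^ 2 * (((S m).card : ℝ) * ∑ n ∈ S m, l2norm σ (ξc n) ^ 2) := by
          apply mul_le_mul_of_nonneg_left h3 (sq_nonneg _)
      _ ≤ (C * l2norm σ b) ^ 2 * ((2 * (k:ℝ) + 1) * ∑ n ∈ S m, l2norm σ (ξc n) ^ 2) := by
          apply mul_le_mul_of_nonneg_left (mul_le_mul_of_nonneg_right h4 h5) (sq_nonneg _)
      _ = (2 * (k:ℝ) + 1) * (C * l2norm σ b) ^ 2 * ∑ n ∈ S m, l2norm σ (ξc n) ^ 2 := by ring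
  -- double sum swap bound
  have hswap : ∑ m ∈ M, ∑ n ∈ S m, l2norm σ (ξc n) ^ 2 ≤
      (2 * (k:ℝ) + 1) * ∑ n ∈ R, l2norm σ (ξc n) ^ 2 := by
    have e1 : ∀ m, ∑ n ∈ S m, l2norm σ (ξc n) ^ 2 =
        ∑ n ∈ R, if m ≤ k + n ∧ n ≤ k + m then l2norm σ (ξc n) ^ 2 else 0 := by
      intro m
      rw [hS, Finset.sum_filter]
    calc ∑ m ∈ M, ∑ n ∈ S m, l2norm σ (ξc n) ^ 2
        = ∑ m ∈ M, ∑ n ∈ R, (if m ≤ k + n ∧ n ≤ k + m then l2norm σ (ξc n) ^ 2 else 0) := by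
          exact Finset.sum_congr rfl fun m _ => e1 m
      _ = ∑ n ∈ R, ∑ m ∈ M, (if m ≤ k + n ∧ n ≤ k + m then l2norm σ (ξc n) ^ 2 else 0) :=
          Finset.sum_comm
      _ ≤ ∑ n ∈ R, (2 * (k:ℝ) + 1) * l2norm σ (ξc n) ^ 2 := by
          apply Finset.sum_le_sum
          intro n _
          have e2 : ∑ m ∈ M, (if m ≤ k + n ∧ n ≤ k + m then l2norm σ (ξc n) ^ 2 else 0)
              = ((M.filter (fun m => m ≤ k + n ∧ n ≤ k + m)).card : ℝ) *
                l2norm σ (ξc n) ^ 2 := by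
            rw [← Finset.sum_filter, Finset.sum_const, nsmul_eq_mul]
          rw [e2]
          apply mul_le_mul_of_nonneg_right _ (sq_nonneg _)
          have hsub : M.filter (fun m => m ≤ k + n ∧ n ≤ k + m) ⊆
              Finset.Icc (n - k) (n + k) := by
            intro m hm
            rw [Finset.mem_filter] at hm
            rw [Finset.mem_Icc]
            omega
          have hcard : (M.filter (fun m => m ≤ k + n ∧ n ≤ k + m)).card ≤ 2 * k + 1 := by
            calc _ ≤ (Finset.Icc (n - k) (n + k)).card := Finset.card_le_card hsub
              _ = n + k + 1 - (n - k) := Nat.card_Icc _ _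
              _ ≤ 2 * k + 1 := by omega
          push_cast
          exact_mod_cast hcard
      _ = (2 * (k:ℝ) + 1) * ∑ n ∈ R, l2norm σ (ξc n) ^ 2 := by rw [Finset.mul_sum]
  -- assemble
  have hfinal : l2norm σ z ^ 2 ≤ (C * (2 * (k:ℝ) + 1) * l2norm σ b * l2norm σ ξ) ^ 2 := by
    calc l2norm σ z ^ 2 = ∑ m ∈ M, l2norm σ (P m z) ^ 2 := pz
      _ ≤ ∑ m ∈ M, (2 * (k:ℝ) + 1) * (C * l2norm σ b) ^ 2 * ∑ n ∈ S m, l2norm σ (ξc n) ^ 2 :=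
          Finset.sum_le_sum fun m _ => hstep2 m
      _ = (2 * (k:ℝ) + 1) * (C * l2norm σ b) ^ 2 *
          ∑ m ∈ M, ∑ n ∈ S m, l2norm σ (ξc n) ^ 2 := by rw [Finset.mul_sum]
      _ ≤ (2 * (k:ℝ) + 1) * (C * l2norm σ b) ^ 2 *
          ((2 * (k:ℝ) + 1) * ∑ n ∈ R, l2norm σ (ξc n) ^ 2) := by
          apply mul_le_mul_of_nonneg_left hswap
          positivity
      _ = (C * (2 * (k:ℝ) + 1) * l2norm σ b * l2norm σ ξ) ^ 2 := by
          rw [← pxi]; ring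
  have hrhs : 0 ≤ C * (2 * (k:ℝ) + 1) * l2norm σ b * l2norm σ ξ := by
    have := l2nonneg b
    have := l2nonneg ξ
    positivity
  have := Real.sqrt_le_sqrt hfinal
  rw [Real.sqrt_sq (l2nonneg z), Real.sqrt_sq hrhs] at this
  exact this
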